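/- Let E be a subfield of ℂ, G a group, V a nonzero finite-dimensional representation of G over E, and χ: G → Eˣ a group homomorphism with χ(g)² = 1 for all g ∈ G. Assume there exists a bijective χ-twisted equivariant E-linear map ψ₀: V → V. Let π be a ℂ-vector space with a ℂ-linear action of G such that every G-equivariant ℂ-linear endomorphism of π is multiplication by a scalar in ℂ. Let ι, ι': V → π be E-linear maps whose ℂ-linear extensions ℂ ⊗_E V → π are bijective, and suppose that ι(g·v) = g·ι(v) and ι'(g·v) = χ(g)·(g·ι'(v)) for all g ∈ G and v ∈ V. Then there exists c ∈ ℂˣ such that c·ι(V) = ι'(V) as E-subspaces of π, and c is unique up to multiplication by an element of Eˣ. -/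

import Mathlib

open scoped TensorProduct

/-- comparison of two `E`-rational structures on an irreducible complex
module.  If `ι` is equivariant and `ι'` is `χ`-twisted equivariant, both with bijective
`ℂ`-linear extensions, a bijective `χ`-twisted equivariant self-map `ψ₀` of `V` exists,
and endomorphisms of `π` commuting with `G` are scalars, then `ι'(V) = c·ι(V)` for
some `c ∈ ℂˣ`, unique up to multiplication by `Eˣ`. -/
theorem stmt_13 {E G V π : Type*} [Field E] [Algebra E ℂ] [Group G]
    [AddCommGroup V] [Module E V] [Nontrivial V] [FiniteDimensional E V]
    (ρ : Representation E G V)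
    (χ : G →* Eˣ) (hχ : ∀ g : G, χ g * χ g = 1)
    (hψ₀ : ∃ ψ₀ : Module.End E V, Function.Bijective ψ₀ ∧
      ∀ (g : G) (v : V), ψ₀ (ρ g v) = (χ g : E) • ρ g (ψ₀ v))
    [AddCommGroup π] [Module ℂ π] [Module E π] [IsScalarTower E ℂ π]
    (ρπ : Representation ℂ G π)
    (hSchur : ∀ f : Module.End ℂ π, (∀ (g : G) (x : π), f (ρπ g x) = ρπ g (f x)) →
      ∃ c : ℂ, f = c • (1 : Module.End ℂ π))
    (ι ι' : V →ₗ[E] π)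
    (hι : Function.Bijective (LinearMap.liftBaseChange ℂ ι))
    (hι' : Function.Bijective (LinearMap.liftBaseChange ℂ ι'))
    (hιeq : ∀ (g : G) (v : V), ι (ρ g v) = ρπ g (ι v))
    (hι'eq : ∀ (g : G) (v : V), ι' (ρ g v) = (χ g : E) • ρπ g (ι' v)) :
    ∃ c : ℂˣ, (Set.range fun v : V => (c : ℂ) • ι v) = Set.range ι' ∧
      ∀ c' : ℂˣ, (Set.range fun v : V => (c' : ℂ) • ι v) = Set.range ι' →
        ∃ e : Eˣ, (c' : ℂ) = algebraMap E ℂ (e : E) * (c : ℂ) := by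
  classical
  obtain ⟨ψ₀, hψ₀bij, hψ₀eq⟩ := hψ₀
  set L : ℂ ⊗[E] V →ₗ[ℂ] π := LinearMap.liftBaseChange ℂ ι with hL
  set L' : ℂ ⊗[E] V →ₗ[ℂ] π := LinearMap.liftBaseChange ℂ ι' with hL'
  let Leq : (ℂ ⊗[E] V) ≃ₗ[ℂ] π := LinearEquiv.ofBijective L hι
  -- basic facts about the algebra map and a basis of V
  have halg : Function.Injective (algebraMap E ℂ) := (algebraMap E ℂ).injective
  let b := Module.Basis.ofVectorSpace E V
  -- coordinates of `1 ⊗ w = d • (1 ⊗ v)`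
  have tmul_eq : ∀ (d : ℂ) (v w : V), (1:ℂ) ⊗ₜ[E] w = d • ((1:ℂ) ⊗ₜ[E] v) →
      ∀ i, algebraMap E ℂ (b.repr w i) = algebraMap E ℂ (b.repr v i) * d := by
    intro d v w h i
    have := congrArg (fun x => (b.baseChange ℂ).repr x i) h
    simp only [TensorProduct.smul_tmul', smul_eq_mul, mul_one,
      Module.Basis.baseChange_repr_tmul] at this
    simpa [Algebra.smul_def] using this
  have tmul_zero' : ∀ w : V, (1:ℂ) ⊗ₜ[E] w = 0 → w = 0 := by
    intro w h
    have h0 : (1:ℂ) ⊗ₜ[E] w = (0:ℂ) • ((1:ℂ) ⊗ₜ[E] w) := by simp [h]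
    have := tmul_eq 0 w w h0
    have hrepr : b.repr w = 0 := by
      ext i
      have := this i
      rw [mul_zero] at this
      simpa using halg (by simpa using this)
    simpa using congrArg b.repr.symm hrepr
  -- `ι` and `ι'` are injective
  have hL_one : ∀ v : V, L ((1:ℂ) ⊗ₜ[E] v) = ι v := by
    intro v; simp [hL, LinearMap.liftBaseChange_tmul]
  have hL'_one : ∀ v : V, L' ((1:ℂ) ⊗ₜ[E] v) = ι' v := by
    intro v; simp [hL', LinearMap.liftBaseChange_tmul]
  have hι'inj : Function.Injective ι' := by
    intro v w h
    have : (1:ℂ) ⊗ₜ[E] v = (1:ℂ) ⊗ₜ[E] w := hι'.injective (by rw [hL'_one, hL'_one, h])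
    have := tmul_zero' (v - w) (by simp [TensorProduct.tmul_sub, this])
    exact sub_eq_zero.mp this
  -- the intertwining endomorphism
  let F : Module.End ℂ π := L' ∘ₗ (LinearMap.baseChange ℂ ψ₀) ∘ₗ (Leq.symm : π →ₗ[ℂ] ℂ ⊗[E] V)
  have hLeq : ∀ y, Leq y = L y := fun y => rfl
  have hFL : ∀ y : ℂ ⊗[E] V, F (L y) = L' (LinearMap.baseChange ℂ ψ₀ y) := by
    intro y
    have : Leq.symm (L y) = y := by rw [← hLeq]; exact Leq.symm_apply_apply y
    simp [F, this]
  -- equivariance of L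
  have hLg : ∀ (g : G) (y : ℂ ⊗[E] V),
      ρπ g (L y) = L (LinearMap.baseChange ℂ (ρ g) y) := by
    intro g y
    induction y using TensorProduct.induction_on with
    | zero => simp
    | tmul z v =>
        simp [hL, LinearMap.liftBaseChange_tmul, LinearMap.baseChange_tmul, hιeq]
    | add x y hx hy => simp [map_add, hx, hy]
  -- χ²-cancellation
  have hχE : ∀ g : G, ((χ g : E) * (χ g : E)) = 1 := by
    intro g
    have := congrArg (Units.val) (hχ g)
    simpa using this
  -- twisted equivariance of L' ∘ ψ₀
  have hL'g : ∀ (g : G) (y : ℂ ⊗[E] V),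
      L' (LinearMap.baseChange ℂ ψ₀ (LinearMap.baseChange ℂ (ρ g) y)) =
        ρπ g (L' (LinearMap.baseChange ℂ ψ₀ y)) := by
    intro g y
    induction y using TensorProduct.induction_on with
    | zero => simp
    | tmul z v =>
        simp only [LinearMap.baseChange_tmul, hL', LinearMap.liftBaseChange_tmul]
        rw [hψ₀eq g v, map_smul, hι'eq g (ψ₀ v)]
        rw [smul_smul, hχE g, one_smul, map_smul]
    | add x y hx hy => simp [map_add, hx, hy]
  -- F commutes with the G-action
  have hFcomm : ∀ (g : G) (x : π), F (ρπ g x) = ρπ g (F x) := by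
    intro g x
    obtain ⟨y, rfl⟩ := hι.surjective x
    rw [hLg g y, hFL, hFL, hL'g]
  obtain ⟨c, hc⟩ := hSchur F hFcomm
  -- the key pointwise identity
  have hkey : ∀ v : V, c • ι v = ι' (ψ₀ v) := by
    intro v
    have h1 : F (ι v) = ι' (ψ₀ v) := by
      rw [← hL_one v, hFL, LinearMap.baseChange_tmul, hL'_one]
    have h2 : F (ι v) = c • ι v := by rw [hc]; simp
    rw [← h2, h1]
  -- c is nonzero
  obtain ⟨v₀, hv₀⟩ := exists_ne (0 : V)
  have hc0 : c ≠ 0 := by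
    intro h
    have := hkey v₀
    rw [h, zero_smul] at this
    have hψv : ψ₀ v₀ = 0 := by
      have : ι' (ψ₀ v₀) = ι' 0 := by simp [← this]
      exact hι'inj this
    exact hv₀ (hψ₀bij.injective (by simpa using hψv))
  refine ⟨Units.mk0 c hc0, ?_, ?_⟩
  · -- range equality
    ext x
    constructor
    · rintro ⟨v, rfl⟩
      exact ⟨ψ₀ v, (hkey v).symm⟩
    · rintro ⟨u, rfl⟩
      obtain ⟨v, rfl⟩ := hψ₀bij.surjective u
      exact ⟨v, hkey v⟩
  · -- uniqueness up to Eˣ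
    intro c' hc'
    -- c' • ι v₀ lies in range ι' = range (c • ι)
    have hmem : c' • ι v₀ ∈ Set.range ι' := hc' ▸ ⟨v₀, rfl⟩
    have hrange : (Set.range fun v : V => c • ι v) = Set.range ι' := by
      ext x
      constructor
      · rintro ⟨v, rfl⟩
        exact ⟨ψ₀ v, (hkey v).symm⟩
      · rintro ⟨u, rfl⟩
        obtain ⟨v, rfl⟩ := hψ₀bij.surjective u
        exact ⟨v, hkey v⟩
    rw [← hrange] at hmem
    obtain ⟨w, hw⟩ := hmem
    -- so c • ι w = c' • ι v₀, hence ι w = (c⁻¹ * c') • ι v₀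
    have hd : ι w = (c⁻¹ * (c' : ℂ)) • ι v₀ := by
      have hw' : c • ι w = (c' : ℂ) • ι v₀ := hw
      have h1 : c⁻¹ • (c • ι w) = c⁻¹ • ((c' : ℂ) • ι v₀) := by rw [hw']
      rwa [smul_smul, smul_smul, inv_mul_cancel₀ hc0, one_smul] at h1
    set d : ℂ := c⁻¹ * (c' : ℂ) with hdd
    have hd0 : d ≠ 0 := mul_ne_zero (inv_ne_zero hc0) (Units.ne_zero c')
    -- transfer to the tensor product
    have htw : (1:ℂ) ⊗ₜ[E] w = d • ((1:ℂ) ⊗ₜ[E] v₀) := by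
      apply hι.injective
      rw [hL_one, map_smul, hL_one, hd]
    have hco := tmul_eq d v₀ w htw
    -- find a nonzero coordinate of v₀
    have hrv : b.repr v₀ ≠ 0 := by
      intro h
      exact hv₀ (by simpa using congrArg b.repr.symm h)
    obtain ⟨i, hi⟩ := Finsupp.ne_iff.mp hrv
    simp only [Finsupp.coe_zero, Pi.zero_apply] at hi
    have hcoi := hco i
    have hai : algebraMap E ℂ (b.repr v₀ i) ≠ 0 := fun h => hi (halg (by simpa using h))
    -- e = (repr w i) / (repr v₀ i)
    have he0 : b.repr w i / b.repr v₀ i ≠ 0 := by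
      intro h
      rw [div_eq_zero_iff] at h
      rcases h with h | h
      · rw [h, map_zero] at hcoi
        exact hd0 ((mul_eq_zero.mp hcoi.symm).resolve_left hai)
      · exact hi h
    refine ⟨Units.mk0 _ he0, ?_⟩
    have hed : algebraMap E ℂ (b.repr w i / b.repr v₀ i) = d := by
      rw [map_div₀, hcoi]
      field_simp
    rw [Units.val_mk0, hed, hdd]
    field_simp
    exact (Units.val_mk0 hc0).symm
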